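/- arXiv:1310.0784 — 4 statements merged into one kernel-verified Lean document; each statement's English description precedes it below -/
import Mathlib

section
/- On the polynomial model of the Thomas bundle, with vector fields of the form X = X^a(x,t)∂_{x^a} + X^0(x,t)·w where w = t∂_t, the divergence div X := ∂_a X^a + (w−1)(X^0) satisfies div[X,Y] = X(div Y) − Y(div X). -/
/- Model of the Thomas bundle: the algebra of densities is
`AddMonoidAlgebra R ℝ` where `R` is a commutative ℝ-algebra modeling
`C^∞(ℝ^n)`, equipped with `n` pairwise commuting derivations `D a` modeling
`∂/∂x^a`; the formal variable of `AddMonoidAlgebra R ℝ` models `t = |Dx|`, so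
`Finsupp.single λ f` is the density `f(x) t^λ`.  A vector field
`X = Σ X^a ∂_a + X^0 · t∂_t` is given by its coefficients
`Xa : Fin n → Den`, `X0 : Den`.  Its action on densities is `act`, its
divergence is `div X = Σ ∂_a X^a + (t∂_t − 1) X^0`, and the commutator
`[X,Y]` has coefficients `X(Y^b) − Y(X^b)` and `X(Y^0) − Y(X^0)`.
Claim: `div [X,Y] = X(div Y) − Y(div X)`. -/

noncomputable section

variable {R : Type*} [CommRing R] [Algebra ℝ R]

/-- The weight operator `t ∂/∂t` on densities. -/
def wop (ψ : AddMonoidAlgebra R ℝ) : AddMonoidAlgebra R ℝ :=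
  AddMonoidAlgebra.ofCoeff (Finsupp.sum ψ.coeff fun l c => Finsupp.single l (l • c))

/-- The coefficientwise partial derivative `∂/∂x^a` on densities. -/
def paD {n : ℕ} (D : Fin n → Derivation ℝ R R) (a : Fin n)
    (ψ : AddMonoidAlgebra R ℝ) : AddMonoidAlgebra R ℝ :=
  AddMonoidAlgebra.ofCoeff (Finsupp.mapRange (D a) (map_zero _) ψ.coeff)

/-- Action of the vector field `Σ Xa^a ∂_a + X0 · t∂_t` on a density. -/
def act {n : ℕ} (D : Fin n → Derivation ℝ R R)
    (Xa : Fin n → AddMonoidAlgebra R ℝ) (X0 : AddMonoidAlgebra R ℝ)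
    (ψ : AddMonoidAlgebra R ℝ) : AddMonoidAlgebra R ℝ :=
  (∑ a, Xa a * paD D a ψ) + X0 * wop ψ

/-- Canonical divergence `div X = Σ ∂_a X^a + (t∂_t − 1)(X^0)`. -/
def divg {n : ℕ} (D : Fin n → Derivation ℝ R R)
    (Xa : Fin n → AddMonoidAlgebra R ℝ) (X0 : AddMonoidAlgebra R ℝ) :
    AddMonoidAlgebra R ℝ :=
  (∑ a, paD D a (Xa a)) + wop X0 - X0


section aux
variable {n : ℕ} (D : Fin n → Derivation ℝ R R)

lemma ama_add_apply (φ ψ : AddMonoidAlgebra R ℝ) (l : ℝ) : (φ + ψ).coeff l = φ.coeff l + ψ.coeff l := rfl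
lemma ama_neg_apply (ψ : AddMonoidAlgebra R ℝ) (l : ℝ) : (-ψ).coeff l = -ψ.coeff l := rfl
lemma ama_sub_apply (φ ψ : AddMonoidAlgebra R ℝ) (l : ℝ) : (φ - ψ).coeff l = φ.coeff l - ψ.coeff l := rfl

lemma paD_apply (a : Fin n) (ψ : AddMonoidAlgebra R ℝ) (l : ℝ) :
    (paD D a ψ).coeff l = D a (ψ.coeff l) := Finsupp.mapRange_apply (hf := map_zero _)

lemma wop_apply (ψ : AddMonoidAlgebra R ℝ) (m : ℝ) :
    (wop ψ).coeff m = m • ψ.coeff m := by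
  classical
  rw [wop, AddMonoidAlgebra.coeff_ofCoeff, Finsupp.sum_apply, Finsupp.sum]
  simp only [Finsupp.single_apply]
  rw [Finset.sum_ite_eq' ψ.coeff.support m (fun l => l • ψ.coeff l)]
  split_ifs with h
  · rfl
  · rw [Finsupp.notMem_support_iff.mp h, smul_zero]

lemma paD_add (a : Fin n) (φ ψ : AddMonoidAlgebra R ℝ) :
    paD D a (φ + ψ) = paD D a φ + paD D a ψ := by
  ext l; simp [paD_apply, ama_add_apply, ama_neg_apply, ama_sub_apply]

lemma paD_zero (a : Fin n) : paD D a (0 : AddMonoidAlgebra R ℝ) = 0 := by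
  ext l; simp [paD_apply, ama_add_apply, ama_neg_apply, ama_sub_apply]

lemma paD_neg (a : Fin n) (ψ : AddMonoidAlgebra R ℝ) :
    paD D a (-ψ) = -paD D a ψ := by
  ext l; simp [paD_apply, ama_add_apply, ama_neg_apply, ama_sub_apply]

lemma paD_sub (a : Fin n) (φ ψ : AddMonoidAlgebra R ℝ) :
    paD D a (φ - ψ) = paD D a φ - paD D a ψ := by
  ext l; simp [paD_apply, ama_add_apply, ama_neg_apply, ama_sub_apply]

lemma wop_add (φ ψ : AddMonoidAlgebra R ℝ) :
    wop (φ + ψ) = wop φ + wop ψ := by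
  ext l; simp [wop_apply, ama_add_apply, smul_add]

lemma wop_zero : wop (0 : AddMonoidAlgebra R ℝ) = 0 := by
  ext l; simp [wop_apply, ama_add_apply, smul_add]

lemma wop_sub (φ ψ : AddMonoidAlgebra R ℝ) :
    wop (φ - ψ) = wop φ - wop ψ := by
  ext l; simp [wop_apply, ama_sub_apply, smul_sub]

lemma paD_single (a : Fin n) (l : ℝ) (c : R) :
    paD D a (AddMonoidAlgebra.single l c) = AddMonoidAlgebra.single l (D a c) :=
  congrArg AddMonoidAlgebra.ofCoeff Finsupp.mapRange_single

lemma wop_single (l : ℝ) (c : R) :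
    wop (AddMonoidAlgebra.single l c : AddMonoidAlgebra R ℝ) = AddMonoidAlgebra.single l (l • c) := by
  ext m
  rw [wop_apply]
  simp only [AddMonoidAlgebra.coeff_single, Finsupp.single_apply]
  split_ifs with h
  · rw [← h]
  · simp

lemma paD_sum {ι : Type*} (a : Fin n) (s : Finset ι) (f : ι → AddMonoidAlgebra R ℝ) :
    paD D a (∑ i ∈ s, f i) = ∑ i ∈ s, paD D a (f i) :=
  map_sum (AddMonoidHom.mk' (paD D a) (paD_add D a)) f s

lemma wop_sum {ι : Type*} (s : Finset ι) (f : ι → AddMonoidAlgebra R ℝ) :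
    wop (∑ i ∈ s, f i) = ∑ i ∈ s, wop (f i : AddMonoidAlgebra R ℝ) :=
  map_sum (AddMonoidHom.mk' (wop (R := R)) wop_add) f s

lemma paD_mul (a : Fin n) (φ ψ : AddMonoidAlgebra R ℝ) :
    paD D a (φ * ψ) = paD D a φ * ψ + φ * paD D a ψ := by
  induction φ using AddMonoidAlgebra.induction_linear with
  | zero => simp [paD_zero]
  | add f g hf hg => rw [add_mul, paD_add, hf, hg, paD_add]; ring
  | single l c =>
    induction ψ using AddMonoidAlgebra.induction_linear with
    | zero => simp [paD_zero]
    | add f g hf hg => rw [mul_add, paD_add, hf, hg, paD_add]; ring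
    | single m e =>
      rw [AddMonoidAlgebra.single_mul_single, paD_single, paD_single, paD_single,
        AddMonoidAlgebra.single_mul_single, AddMonoidAlgebra.single_mul_single,
        ← AddMonoidAlgebra.single_add]
      congr 1
      rw [Derivation.leibniz]
      simp [smul_eq_mul]; ring

lemma wop_mul (φ ψ : AddMonoidAlgebra R ℝ) :
    wop (φ * ψ) = wop φ * ψ + φ * wop ψ := by
  induction φ using AddMonoidAlgebra.induction_linear with
  | zero => simp [wop_zero]
  | add f g hf hg => rw [add_mul, wop_add, hf, hg, wop_add]; ring
  | single l c =>
    induction ψ using AddMonoidAlgebra.induction_linear with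
    | zero => simp [wop_zero]
    | add f g hf hg => rw [mul_add, wop_add, hf, hg, wop_add]; ring
    | single m e =>
      rw [AddMonoidAlgebra.single_mul_single, wop_single, wop_single, wop_single,
        AddMonoidAlgebra.single_mul_single, AddMonoidAlgebra.single_mul_single,
        ← AddMonoidAlgebra.single_add]
      congr 1
      rw [add_smul, smul_mul_assoc, mul_smul_comm]

lemma paD_wop (a : Fin n) (ψ : AddMonoidAlgebra R ℝ) :
    paD D a (wop ψ) = wop (paD D a ψ) := by
  ext l; simp [paD_apply, wop_apply]

lemma paD_comm (hD : ∀ a b (f : R), D a (D b f) = D b (D a f)) (a b : Fin n)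
    (ψ : AddMonoidAlgebra R ℝ) :
    paD D a (paD D b ψ) = paD D b (paD D a ψ) := by
  ext l; simp [paD_apply, hD]

end aux

section main
variable {n : ℕ} (D : Fin n → Derivation ℝ R R)
    (Xa : Fin n → AddMonoidAlgebra R ℝ) (X0 : AddMonoidAlgebra R ℝ)

variable {n : ℕ} (D : Fin n → Derivation ℝ R R)
    (Xa : Fin n → AddMonoidAlgebra R ℝ) (X0 : AddMonoidAlgebra R ℝ)

lemma act_add (φ ψ : AddMonoidAlgebra R ℝ) :
    act D Xa X0 (φ + ψ) = act D Xa X0 φ + act D Xa X0 ψ := by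
  simp only [act, paD_add, wop_add, mul_add, Finset.sum_add_distrib]
  abel

lemma act_zero : act D Xa X0 (0 : AddMonoidAlgebra R ℝ) = 0 := by
  simp [act, paD_zero, wop_zero]

lemma act_sub (φ ψ : AddMonoidAlgebra R ℝ) :
    act D Xa X0 (φ - ψ) = act D Xa X0 φ - act D Xa X0 ψ := by
  simp only [act, paD_sub, wop_sub, mul_sub, Finset.sum_sub_distrib]
  abel

lemma act_sum {ι : Type*} (s : Finset ι) (f : ι → AddMonoidAlgebra R ℝ) :
    act D Xa X0 (∑ i ∈ s, f i) = ∑ i ∈ s, act D Xa X0 (f i) :=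
  map_sum (AddMonoidHom.mk' (act D Xa X0) (act_add D Xa X0)) f s

lemma paD_act (hD : ∀ a b (f : R), D a (D b f) = D b (D a f)) (b : Fin n)
    (ψ : AddMonoidAlgebra R ℝ) :
    paD D b (act D Xa X0 ψ)
      = act D Xa X0 (paD D b ψ)
        + ((∑ a, paD D b (Xa a) * paD D a ψ) + paD D b X0 * wop ψ) := by
  have hcomm : ∀ a, paD D b (paD D a ψ) = paD D a (paD D b ψ) :=
    fun a => paD_comm D hD b a ψ
  simp only [act, paD_add, paD_sum, paD_mul, paD_wop, hcomm, Finset.sum_add_distrib]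
  abel

lemma wop_act (ψ : AddMonoidAlgebra R ℝ) :
    wop (act D Xa X0 ψ)
      = act D Xa X0 (wop ψ)
        + ((∑ a, wop (Xa a) * paD D a ψ) + wop X0 * wop ψ) := by
  simp only [act, wop_add, wop_sum, wop_mul, ← paD_wop, Finset.sum_add_distrib]
  abel

end main

theorem div_of_commutator {n : ℕ} (D : Fin n → Derivation ℝ R R)
    (hD : ∀ a b (f : R), D a (D b f) = D b (D a f))
    (Xa Ya : Fin n → AddMonoidAlgebra R ℝ) (X0 Y0 : AddMonoidAlgebra R ℝ) :
    divg D (fun b => act D Xa X0 (Ya b) - act D Ya Y0 (Xa b))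
           (act D Xa X0 Y0 - act D Ya Y0 X0)
      = act D Xa X0 (divg D Ya Y0) - act D Ya Y0 (divg D Xa X0) := by
  have hc1 : (∑ b : Fin n, ∑ a : Fin n, paD D b (Xa a) * paD D a (Ya b))
      = ∑ b : Fin n, ∑ a : Fin n, paD D b (Ya a) * paD D a (Xa b) := by
    rw [Finset.sum_comm]
    exact Finset.sum_congr rfl fun b _ => Finset.sum_congr rfl fun a _ => mul_comm _ _
  have hc2 : (∑ b : Fin n, paD D b X0 * wop (Ya b))
      = ∑ b : Fin n, wop (Ya b) * paD D b X0 :=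
    Finset.sum_congr rfl fun b _ => mul_comm _ _
  have hc3 : (∑ b : Fin n, paD D b Y0 * wop (Xa b))
      = ∑ b : Fin n, wop (Xa b) * paD D b Y0 :=
    Finset.sum_congr rfl fun b _ => mul_comm _ _
  have hc4 : wop X0 * wop Y0 = wop Y0 * wop X0 := mul_comm _ _
  simp only [divg, act_sub, act_add, act_sum, paD_sub, wop_sub, Finset.sum_sub_distrib,
    paD_act D Xa X0 hD, paD_act D Ya Y0 hD, wop_act D Xa X0, wop_act D Ya Y0,
    Finset.sum_add_distrib]
  rw [hc1, hc2, hc3, hc4]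
  abel

end
end

section
/- The formal divergence on operators satisfies the identity δ[D₁,D₂] = [δD₁, D₂] + [D₁, δD₂] + [δD₁, δD₂], where δ(D) = −(D − (−1)^k D*) for D of order ≤ k and [·,·] is the commutator of operators. -/
noncomputable section

/- The formal divergence on algebraic differential operators:
`δ(D) := −(D − (−1)^k D*)` for `D` of order ≤ k, adjoints taken w.r.t. an
invariant nondegenerate scalar product on the commutative algebra `A`
(the adjoint of `⁅D₁,D₂⁆` being `⁅D₂*,D₁*⁆`, of order ≤ k₁+k₂−1).
Claim: `δ⁅D₁,D₂⁆ = ⁅δD₁,D₂⁆ + ⁅D₁,δD₂⁆ + ⁅δD₁,δD₂⁆`. -/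

variable {A : Type*} [CommRing A] [Algebra ℝ A]

def mulOp (a : A) : Module.End ℝ A := LinearMap.mulLeft ℝ a

def ordLE : ℕ → Module.End ℝ A → Prop
  | 0, T => ∀ a : A, ⁅T, mulOp a⁆ = 0
  | (k + 1), T => ∀ a : A, ordLE k ⁅T, mulOp a⁆

section
attribute [local instance] LieRing.ofAssociativeRing

lemma ord0_eq {A : Type*} [CommRing A] [Algebra ℝ A] (S : Module.End ℝ A)
    (hS : ordLE 0 S) : S = mulOp (S 1) := by
  ext b
  have h := congrArg (fun T : Module.End ℝ A => T 1) (hS b)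
  simp only [Ring.lie_def, LinearMap.sub_apply, Module.End.mul_apply,
    LinearMap.zero_apply, mulOp, LinearMap.mulLeft_apply, mul_one] at h
  have : S b = b * S 1 := sub_eq_zero.mp h
  simpa [mulOp, LinearMap.mulLeft_apply, mul_comm] using this

lemma ord0_bracket {A : Type*} [CommRing A] [Algebra ℝ A] (S T : Module.End ℝ A)
    (hS : ordLE 0 S) (hT : ordLE 0 T) : ⁅S, T⁆ = 0 := by
  rw [ord0_eq S hS, ord0_eq T hT]
  ext b
  simp [Ring.lie_def, mulOp, LinearMap.mulLeft_apply, mul_comm, mul_left_comm]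

lemma expand_brackets {A : Type*} [CommRing A] [Algebra ℝ A]
    (D₁ D₂ D₁s D₂s : Module.End ℝ A) (c₁ c₂ : ℝ) :
    ⁅-(D₁ - c₁ • D₁s), D₂⁆ + ⁅D₁, -(D₂ - c₂ • D₂s)⁆ +
      ⁅-(D₁ - c₁ • D₁s), -(D₂ - c₂ • D₂s)⁆ =
    (c₁ * c₂) • ⁅D₁s, D₂s⁆ - ⁅D₁, D₂⁆ := by
  simp only [neg_lie, lie_neg, sub_lie, lie_sub, smul_lie, lie_smul, smul_sub,
    smul_smul, neg_sub, neg_neg]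
  module

end

theorem divergence_of_commutator_of_operators
    (pair : A → A → ℝ)
    (hsymm : ∀ a b, pair a b = pair b a)
    (hinv : ∀ a b c, pair (a * b) c = pair a (b * c))
    (hnd : ∀ a : A, (∀ b, pair a b = 0) → a = 0)
    (k₁ k₂ : ℕ) (D₁ D₂ D₁s D₂s : Module.End ℝ A)
    (hord₁ : ordLE k₁ D₁) (hord₂ : ordLE k₂ D₂)
    (hord₁s : ordLE k₁ D₁s) (hord₂s : ordLE k₂ D₂s)
    (hadj₁ : ∀ ψ χ, pair (D₁ ψ) χ = pair ψ (D₁s χ))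
    (hadj₂ : ∀ ψ χ, pair (D₂ ψ) χ = pair ψ (D₂s χ))
    (δ₁ δ₂ δbr : Module.End ℝ A)
    (hδ₁ : δ₁ = -(D₁ - ((-1 : ℝ) ^ k₁) • D₁s))
    (hδ₂ : δ₂ = -(D₂ - ((-1 : ℝ) ^ k₂) • D₂s))
    (hδbr : δbr = -(⁅D₁, D₂⁆ - ((-1 : ℝ) ^ (k₁ + k₂ - 1)) • ⁅D₂s, D₁s⁆)) :
    δbr = ⁅δ₁, D₂⁆ + ⁅D₁, δ₂⁆ + ⁅δ₁, δ₂⁆ := by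
  letI : LieRing (Module.End ℝ A) := LieRing.ofAssociativeRing
  subst hδ₁ hδ₂ hδbr
  rw [expand_brackets]
  rcases Nat.eq_zero_or_pos (k₁ + k₂) with h | h
  · obtain ⟨h1, h2⟩ := Nat.add_eq_zero.mp h
    subst h1 h2
    rw [ord0_bracket D₁s D₂s hord₁s hord₂s, ord0_bracket D₂s D₁s hord₂s hord₁s]
    simp
  · have hc : ((-1 : ℝ) ^ (k₁ + k₂ - 1)) = -((-1 : ℝ) ^ k₁ * (-1 : ℝ) ^ k₂) := by
      obtain ⟨m, hm⟩ := Nat.exists_eq_succ_of_ne_zero h.ne'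
      rw [← pow_add, hm, Nat.succ_sub_one, pow_succ]
      ring
    rw [hc, ← lie_skew D₂s D₁s]
    module

end
end

section
/- A first-order differential operator L on the algebra of densities is anti-self-adjoint (L* = −L) with respect to the invariant scalar product if and only if it is a generalized Lie derivative, i.e., of the form L = t^μ(X^a ∂_a − (μ−1)^{-1} ∂_a X^a · w) for some coefficients X^a (assuming L has homogeneous weight μ ≠ 1 and L(1) = 0). -/
noncomputable section

variable {R : Type*} [CommRing R] [Algebra ℝ R]

lemma myPaD_single {n : ℕ} (D : Fin n → Derivation ℝ R R) (a : Fin n) (l : ℝ) (f : R) :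
    paD D a (AddMonoidAlgebra.single l f) = AddMonoidAlgebra.single l (D a f) := by
  unfold paD; rw [AddMonoidAlgebra.coeff_single, Finsupp.mapRange_single]; rfl

lemma myWop_single (l : ℝ) (f : R) :
    wop (AddMonoidAlgebra.single l f) = AddMonoidAlgebra.single l (l • f) := by
  unfold wop; rw [AddMonoidAlgebra.coeff_single, Finsupp.sum_single_index (by simp)]; rfl

lemma myPaD_add {n : ℕ} (D : Fin n → Derivation ℝ R R) (a : Fin n)
    (ψ χ : AddMonoidAlgebra R ℝ) : paD D a (ψ + χ) = paD D a ψ + paD D a χ := by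
  unfold paD; rw [AddMonoidAlgebra.coeff_add, Finsupp.mapRange_add (map_add _)]; rfl

lemma myWop_add (ψ χ : AddMonoidAlgebra R ℝ) : wop (ψ + χ) = wop ψ + wop χ := by
  unfold wop
  rw [AddMonoidAlgebra.coeff_add, Finsupp.sum_add_index' (by simp) (by intros; simp [smul_add, Finsupp.single_add])]; rfl

lemma mySingle_mul_apply (s : ℝ) (c : R) (m : ℝ) (g : R) (u : ℝ) :
    (AddMonoidAlgebra.single s c * AddMonoidAlgebra.single m g : AddMonoidAlgebra R ℝ).coeff u
      = if s + m = u then c * g else 0 := by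
  rw [AddMonoidAlgebra.single_mul_single, AddMonoidAlgebra.coeff_single_apply]

lemma myAdd_apply (a b : AddMonoidAlgebra R ℝ) (u : ℝ) : (a + b).coeff u = a.coeff u + b.coeff u := rfl

lemma mySingle_sum (s : ℝ) {ι : Type*} (t : Finset ι) (v : ι → R) :
    (AddMonoidAlgebra.single s (∑ i ∈ t, v i) : AddMonoidAlgebra R ℝ)
      = ∑ i ∈ t, AddMonoidAlgebra.single s (v i) := by
  exact map_sum (AddMonoidAlgebra.singleAddHom s) v t

lemma mySingle_add (s : ℝ) (c d : R) :
    (AddMonoidAlgebra.single s (c + d) : AddMonoidAlgebra R ℝ)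
      = AddMonoidAlgebra.single s c + AddMonoidAlgebra.single s d := by
  exact AddMonoidAlgebra.single_add _ _ _

theorem first_order_anti_self_adjoint_iff_generalized_Lie
    {n : ℕ} (D : Fin n → Derivation ℝ R R)
    (intR : R →ₗ[ℝ] ℝ)
    (hparts : ∀ (a : Fin n) (f : R), intR (D a f) = 0)
    (hnd : ∀ f : R, (∀ g, intR (f * g) = 0) → f = 0)
    (μ : ℝ) (hμ : μ ≠ 1) (Xa : Fin n → R) (X0 : R)
    (pair : AddMonoidAlgebra R ℝ → AddMonoidAlgebra R ℝ → ℝ)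
    (hpair : ∀ ψ χ, pair ψ χ = intR ((ψ * χ).coeff 1))
    (L : AddMonoidAlgebra R ℝ → AddMonoidAlgebra R ℝ)
    (hL : ∀ ψ, L ψ = (∑ a, AddMonoidAlgebra.single μ (Xa a) * paD D a ψ)
        + AddMonoidAlgebra.single μ X0 * wop ψ) :
    (∀ ψ χ, pair (L ψ) χ = -pair ψ (L χ))
      ↔ X0 = -((μ - 1)⁻¹ • ∑ a, D a (Xa a)) := by
  set S : R := ∑ a, D a (Xa a) with hS
  have hμ' : (1 - μ : ℝ) ≠ 0 := by intro h; apply hμ; linarith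
  have hμ'' : (μ - 1 : ℝ) ≠ 0 := sub_ne_zero.mpr hμ
  -- L on singles
  have hLsingle : ∀ (l : ℝ) (f : R), L (AddMonoidAlgebra.single l f)
      = AddMonoidAlgebra.single (μ + l) ((∑ a, Xa a * D a f) + X0 * (l • f)) := by
    intro l f
    rw [hL]
    simp only [myPaD_single, myWop_single, AddMonoidAlgebra.single_mul_single]
    rw [mySingle_add, mySingle_sum]
  -- pairing of L-single with single
  have hps1 : ∀ (l : ℝ) (f : R) (m : ℝ) (g : R),
      pair (L (AddMonoidAlgebra.single l f)) (AddMonoidAlgebra.single m g)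
      = if μ + l + m = 1 then intR (((∑ a, Xa a * D a f) + X0 * (l • f)) * g) else 0 := by
    intro l f m g
    rw [hpair, hLsingle, mySingle_mul_apply]
    split <;> simp
  have hps2 : ∀ (l : ℝ) (f : R) (m : ℝ) (g : R),
      pair (AddMonoidAlgebra.single l f) (L (AddMonoidAlgebra.single m g))
      = if μ + l + m = 1 then intR (f * ((∑ a, Xa a * D a g) + X0 * (m • g))) else 0 := by
    intro l f m g
    rw [hpair, hLsingle, mySingle_mul_apply]
    by_cases h : μ + l + m = 1
    · rw [if_pos (by linarith : l + (μ + m) = 1), if_pos h]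
    · rw [if_neg (by intro h'; apply h; linarith), if_neg h, map_zero]
  -- integration by parts
  have ibp : ∀ (a : Fin n) (h : R), intR (Xa a * D a h) = - intR (D a (Xa a) * h) := by
    intro a h
    have h1 := hparts a (Xa a * h)
    rw [Derivation.leibniz] at h1
    simp only [smul_eq_mul] at h1
    rw [map_add] at h1
    rw [mul_comm ((D a) (Xa a)) h]
    linarith
  constructor
  · -- forward direction
    intro H
    have key : ∀ g : R, intR (((1 - μ) • X0 - S) * g) = 0 := by
      intro g
      have h1 := H (AddMonoidAlgebra.single 0 (1 : R)) (AddMonoidAlgebra.single (1 - μ) g)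
      rw [hps1, hps2] at h1
      rw [if_pos (by ring : μ + 0 + (1 - μ) = 1), if_pos (by ring : μ + 0 + (1 - μ) = 1)] at h1
      simp only [Derivation.map_one_eq_zero, mul_zero, Finset.sum_const_zero, zero_smul,
        add_zero, zero_add, zero_mul, map_zero, one_mul] at h1
      have h2 : intR ((∑ a, Xa a * D a g) + X0 * ((1 - μ) • g)) = 0 := by linarith
      rw [map_add, map_sum, Finset.sum_congr rfl (fun a _ => ibp a g),
        mul_smul_comm, map_smul, Finset.sum_neg_distrib] at h2
      rw [sub_mul, map_sub, smul_mul_assoc, map_smul]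
      have h5 : intR (S * g) = ∑ a, intR (D a (Xa a) * g) := by
        rw [hS, Finset.sum_mul, map_sum]
      rw [h5]
      simp only [smul_eq_mul] at h2 ⊢
      linarith
    have h6 : (1 - μ) • X0 - S = 0 := hnd _ key
    have h7 : (1 - μ) • X0 = S := by rwa [sub_eq_zero] at h6
    rw [show -((μ - 1)⁻¹ • S) = (1 - μ)⁻¹ • S by rw [← neg_smul, ← inv_neg, neg_sub]]
    rw [← h7, smul_smul, inv_mul_cancel₀ hμ', one_smul]
  · -- backward direction
    intro hX
    have hX' : (1 - μ) • X0 = S := by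
      rw [hX, smul_neg, smul_smul,
        show (1 - μ) * (μ - 1)⁻¹ = -1 by
          rw [show (1 - μ : ℝ) = -(μ - 1) by ring, neg_mul, mul_inv_cancel₀ hμ'']]
      simp
    -- key single-single computation
    have key : ∀ (l : ℝ) (f : R) (m : ℝ) (g : R),
        pair (L (AddMonoidAlgebra.single l f)) (AddMonoidAlgebra.single m g)
        + pair (AddMonoidAlgebra.single l f) (L (AddMonoidAlgebra.single m g)) = 0 := by
      intro l f m g
      rw [hps1, hps2]
      by_cases hc : μ + l + m = 1
      · rw [if_pos hc, if_pos hc, ← map_add]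
        have hsum : ∑ a, f * (Xa a * D a g) = ∑ a, Xa a * f * D a g :=
          Finset.sum_congr rfl (fun a _ => by ring)
        have harg : ((∑ a, Xa a * D a f) + X0 * (l • f)) * g
            + f * ((∑ a, Xa a * D a g) + X0 * (m • g))
            = (∑ a, (Xa a * (D a f) * g + Xa a * f * (D a g))) + (l + m) • (X0 * (f * g)) := by
          rw [Finset.sum_add_distrib, add_mul, mul_add, Finset.sum_mul, Finset.mul_sum, hsum]
          simp only [Algebra.smul_def, map_add]
          ring
        rw [harg, show l + m = 1 - μ by linarith, map_add, map_smul, map_sum]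
        have hterm : ∀ a ∈ Finset.univ,
            intR (Xa a * D a f * g + Xa a * f * D a g) = - intR (D a (Xa a) * (f * g)) := by
          intro a _
          have h : Xa a * D a f * g + Xa a * f * D a g = Xa a * D a (f * g) := by
            rw [Derivation.leibniz]; simp only [smul_eq_mul]; ring
          rw [h, ibp]
        rw [Finset.sum_congr rfl hterm, Finset.sum_neg_distrib]
        have h8 : (1 - μ) • intR (X0 * (f * g)) = intR (S * (f * g)) := by
          rw [← map_smul, ← smul_mul_assoc, hX']
        have h9 : intR (S * (f * g)) = ∑ a, intR (D a (Xa a) * (f * g)) := by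
          rw [hS, Finset.sum_mul, map_sum]
        rw [h8, h9]
        ring
      · rw [if_neg hc, if_neg hc]; ring
    -- bilinearity setup
    have hconv : ∀ (a : ℝ) (b : R),
        (AddMonoidAlgebra.single a b : AddMonoidAlgebra R ℝ) = AddMonoidAlgebra.single a b :=
      fun _ _ => rfl
    have hL0 : L 0 = 0 := by
      rw [hL]; simp [paD, wop]
    have hLadd : ∀ ψ χ, L (ψ + χ) = L ψ + L χ := by
      intro ψ χ
      rw [hL, hL, hL, myWop_add]
      simp only [myPaD_add, mul_add, Finset.sum_add_distrib]
      abel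
    have hp0r : ∀ ψ, pair ψ 0 = 0 := by intro ψ; rw [hpair]; simp
    have hp0l : ∀ χ, pair 0 χ = 0 := by intro χ; rw [hpair]; simp
    have hpaddl : ∀ ψ ψ' χ, pair (ψ + ψ') χ = pair ψ χ + pair ψ' χ := by
      intro ψ ψ' χ
      rw [hpair, hpair, hpair, add_mul, myAdd_apply, map_add]
    have hpaddr : ∀ ψ χ χ', pair ψ (χ + χ') = pair ψ χ + pair ψ χ' := by
      intro ψ χ χ'
      rw [hpair, hpair, hpair, mul_add, myAdd_apply, map_add]
    have key2 : ∀ (ψ : AddMonoidAlgebra R ℝ) (m : ℝ) (g : R),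
        pair (L ψ) (AddMonoidAlgebra.single m g)
        + pair ψ (L (AddMonoidAlgebra.single m g)) = 0 := by
      intro ψ m g
      induction ψ using AddMonoidAlgebra.induction with
      | zero => rw [hL0, hp0l, hp0l]; ring
      | single_add l f ψ' _ _ ih =>
        rw [← hconv, hLadd, hpaddl, hpaddl]
        have := key l f m g
        linarith
    have key3 : ∀ (ψ χ : AddMonoidAlgebra R ℝ), pair (L ψ) χ + pair ψ (L χ) = 0 := by
      intro ψ χ
      induction χ using AddMonoidAlgebra.induction with
      | zero => rw [hL0, hp0r, hp0r]; ring
      | single_add m g χ' _ _ ih =>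
        rw [← hconv, hLadd, hpaddr, hpaddr]
        have := key2 ψ m g
        linarith
    intro ψ χ
    have := key3 ψ χ
    linarith

end
end

section
/- On the Thomas bundle, the canonical odd Laplacian applied to a multivector field P = P₀(x,t,x*) + t t* P₁(x,t,x*) gives δP = δ₀P₀ − (1−w)(P₁) − t t* δ₀P₁, where δ₀ = ∂_{x^a}∂_{x*_a} and w = t∂_t; consequently, if δP = 0 and 1−w is invertible on P₁, then P₁ = (1−w)^{-1}δ₀P₀, so P is determined by P₀. -/
noncomputable section

/- Model of multivector fields on the Thomas bundle.  Multivectors in the odd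
variables x*_1,…,x*_n over `C^∞(ℝ^n)` are modeled as `W := Finset (Fin n) → R`
(the coefficient of the monomial `x*_S`), where `R` is a commutative ℝ-algebra
with derivations `D a = ∂/∂x^a`; `dxs a` is the odd derivative `∂/∂x*_a` and
`delta0 = Σ_a ∂/∂x^a ∂/∂x*_a`.  Adjoining the even variable `t` gives
`V := ℝ →₀ W`, with `single λ c = c·t^λ`; the odd variable `t*` is adjoined by
passing to pairs `P = (P₀, P₁) ∈ V × V`, representing `P = P₀ + t t* P₁`.
The canonical odd Laplacian is `δP := δ₀P + t²∂_t(t⁻²∂_{t*}P)`, where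
`∂_{t*}(P₀ + t t* P₁) = t P₁` and `δ₀(P₀ + t t* P₁) = δ₀P₀ − t t* δ₀P₁`.
Claims: `δP = δ₀P₀ − (1 − t∂_t)(P₁) − t t* δ₀P₁`; consequently, for `P`
homogeneous of weight μ ≠ 1 with `δP = 0`, one has `P₁ = (1−μ)⁻¹ δ₀P₀`,
so `P` is determined by `P₀`. -/

variable {R : Type*} [CommRing R] [Algebra ℝ R] {n : ℕ}

/-- Odd derivative `∂/∂x*_a` on multivectors. -/
def dxs (a : Fin n) (P : Finset (Fin n) → R) : Finset (Fin n) → R :=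
  fun S => if a ∈ S then 0
    else ((-1 : ℤ) ^ (S.filter (· < a)).card) • P (insert a S)

/-- `δ₀ = Σ_a ∂/∂x^a ∂/∂x*_a`. -/
def delta0 (D : Fin n → Derivation ℝ R R) (P : Finset (Fin n) → R) :
    Finset (Fin n) → R :=
  fun S => ∑ a, D a (dxs a P S)

/-- Multiplication by `t^k`. -/
def shiftV (k : ℝ) (v : ℝ →₀ (Finset (Fin n) → R)) :
    ℝ →₀ (Finset (Fin n) → R) :=
  Finsupp.mapDomain (· + k) v

/-- The derivative `∂/∂t`. -/
def dtV (v : ℝ →₀ (Finset (Fin n) → R)) : ℝ →₀ (Finset (Fin n) → R) :=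
  v.sum fun l c => Finsupp.single (l - 1) (l • c)

/-- The weight operator `t∂_t`. -/
def wopV (v : ℝ →₀ (Finset (Fin n) → R)) : ℝ →₀ (Finset (Fin n) → R) :=
  v.sum fun l c => Finsupp.single l (l • c)

/-- Coefficientwise `δ₀` on `V`. -/
def delta0V (D : Fin n → Derivation ℝ R R) (v : ℝ →₀ (Finset (Fin n) → R)) :
    ℝ →₀ (Finset (Fin n) → R) :=
  v.sum fun l c => Finsupp.single l (delta0 D c)

/-- The canonical odd Laplacian `δP = δ₀P + t²∂_t(t⁻²∂_{t*}P)` on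
`P = P₀ + t t* P₁`, encoded as the pair `(P₀, P₁)`. -/
def deltaBV (D : Fin n → Derivation ℝ R R)
    (P : (ℝ →₀ (Finset (Fin n) → R)) × (ℝ →₀ (Finset (Fin n) → R))) :
    (ℝ →₀ (Finset (Fin n) → R)) × (ℝ →₀ (Finset (Fin n) → R)) :=
  (delta0V D P.1 + shiftV 2 (dtV (shiftV (-2) (shiftV 1 P.2))),
   - delta0V D P.2)


lemma delta0_zero (D : Fin n → Derivation ℝ R R) : delta0 D (0 : Finset (Fin n) → R) = 0 := by
  funext S; simp [delta0, dxs]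
  -- fallback handled below

lemma shiftV_add (k : ℝ) (a b : ℝ →₀ (Finset (Fin n) → R)) :
    shiftV k (a + b) = shiftV k a + shiftV k b := Finsupp.mapDomain_add

lemma dtV_add (a b : ℝ →₀ (Finset (Fin n) → R)) : dtV (a + b) = dtV a + dtV b := by
  unfold dtV
  rw [Finsupp.sum_add_index] <;> intros <;> simp [smul_add, Finsupp.single_add]

lemma wopV_add (a b : ℝ →₀ (Finset (Fin n) → R)) : wopV (a + b) = wopV a + wopV b := by
  unfold wopV
  rw [Finsupp.sum_add_index] <;> intros <;> simp [smul_add, Finsupp.single_add]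

lemma key (v : ℝ →₀ (Finset (Fin n) → R)) :
    shiftV 2 (dtV (shiftV (-2) (shiftV 1 v))) = wopV v - v := by
  induction v using Finsupp.induction_linear with
  | zero => simp [shiftV, dtV, wopV]
  | add f g hf hg =>
      rw [shiftV_add, shiftV_add, dtV_add, shiftV_add, hf, hg, wopV_add]
      abel
  | single l c =>
      simp only [shiftV, dtV, wopV, Finsupp.mapDomain_single]
      rw [Finsupp.sum_single_index (by simp), Finsupp.sum_single_index (by simp)]
      simp only [Finsupp.mapDomain_single]
      have h1 : l + 1 + -2 - 1 + 2 = l := by ring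
      have h2 : l + 1 + -2 = l - 1 := by ring
      rw [h1, h2, sub_smul, one_smul, Finsupp.single_sub]

theorem odd_Laplacian_formula_and_homogeneous_solution
    (D : Fin n → Derivation ℝ R R) :
    (∀ P : (ℝ →₀ (Finset (Fin n) → R)) × (ℝ →₀ (Finset (Fin n) → R)),
      deltaBV D P = (delta0V D P.1 - (P.2 - wopV P.2), - delta0V D P.2))
    ∧ ∀ (μ : ℝ), μ ≠ 1 → ∀ p₀ p₁ : Finset (Fin n) → R,
        deltaBV D (Finsupp.single μ p₀, Finsupp.single μ p₁) = 0 →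
          p₁ = (1 - μ)⁻¹ • delta0 D p₀ := by
  have hform : ∀ P : (ℝ →₀ (Finset (Fin n) → R)) × (ℝ →₀ (Finset (Fin n) → R)),
      deltaBV D P = (delta0V D P.1 - (P.2 - wopV P.2), - delta0V D P.2) := by
    intro P
    unfold deltaBV
    rw [key]
    refine Prod.ext ?_ rfl
    abel
  refine ⟨hform, ?_⟩
  intro μ hμ p₀ p₁ h
  rw [hform] at h
  have h1 : delta0V D (Finsupp.single μ p₀)
      - (Finsupp.single μ p₁ - wopV (Finsupp.single μ p₁)) = 0 :=
    congrArg Prod.fst h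
  have hd0 : delta0V D (Finsupp.single μ p₀) = Finsupp.single μ (delta0 D p₀) := by
    unfold delta0V
    rw [Finsupp.sum_single_index (by simp [delta0_zero])]
  have hw : wopV (Finsupp.single μ p₁) = Finsupp.single μ (μ • p₁) := by
    unfold wopV
    rw [Finsupp.sum_single_index (by simp)]
  rw [hd0, hw] at h1
  have h2 := congrArg (fun f => f μ) h1
  simp only [Finsupp.sub_apply, Finsupp.single_eq_same, Finsupp.coe_zero, Pi.zero_apply] at h2
  have h3 : delta0 D p₀ = (1 - μ) • p₁ := by
    rw [sub_smul, one_smul]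
    linear_combination h2
  have hne : (1 - μ) ≠ 0 := sub_ne_zero.mpr (Ne.symm hμ)
  rw [h3, inv_smul_smul₀ hne]

end
end
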